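/- Let X, X_1, …, X_n be i.i.d. real-valued random variables with law μ, and let R_n = max_{1≤i≤n} X_i with law ν. Then for any α > 1, D_α(ν‖μ) ≤ (1/(α−1)) log(n^α/(α(n−1)+1)), and consequently D_α(ν‖μ) ≤ log n. -/

import Mathlib

open Real MeasureTheory ProbabilityTheory Set Filter
open scoped ENNReal NNReal

noncomputable def stmtQ (μ₀ : Measure ℝ) : ℝ → ℝ :=
  fun u => if u ∈ Set.Ioo (0:ℝ) 1 then sInf {x | u ≤ cdf μ₀ x} else 0

lemma stmtQ_le_iff {μ₀ : Measure ℝ} [IsProbabilityMeasure μ₀] {u : ℝ}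
    (hu : u ∈ Set.Ioo (0:ℝ) 1) (x : ℝ) :
    stmtQ μ₀ u ≤ x ↔ u ≤ cdf μ₀ x := by
  set S : Set ℝ := {y | u ≤ cdf μ₀ y} with hS
  have hne : S.Nonempty := by
    obtain ⟨y, hy⟩ := ((tendsto_cdf_atTop μ₀).eventually (eventually_ge_nhds hu.2)).exists
    exact ⟨y, hy⟩
  have hbdd : BddBelow S := by
    obtain ⟨x₀, hx₀⟩ := ((tendsto_cdf_atBot μ₀).eventually (eventually_lt_nhds hu.1)).exists
    refine ⟨x₀, fun y hy => ?_⟩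
    by_contra hlt
    push_neg at hlt
    have : (cdf μ₀ y : ℝ) < u := lt_of_le_of_lt (monotone_cdf μ₀ hlt.le) hx₀
    exact absurd hy (not_le.mpr this)
  have hQ : stmtQ μ₀ u = sInf S := if_pos hu
  have hmem : u ≤ cdf μ₀ (sInf S) := by
    have hIoi : ∀ y ∈ Ioi (sInf S), u ≤ cdf μ₀ y := by
      intro y hy
      obtain ⟨a, ha, hay⟩ := exists_lt_of_csInf_lt hne hy
      exact ha.trans (monotone_cdf μ₀ hay.le)
    have hrc : Tendsto (cdf μ₀) (nhdsWithin (sInf S) (Ioi (sInf S))) (nhds (cdf μ₀ (sInf S))) :=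
      ((cdf μ₀).right_continuous (sInf S)).mono Ioi_subset_Ici_self
    exact ge_of_tendsto hrc (eventually_nhdsWithin_of_forall hIoi)
  rw [hQ]
  constructor
  · intro h
    exact hmem.trans (monotone_cdf μ₀ h)
  · intro h
    exact csInf_le hbdd h

lemma stmtQ_measurable (μ₀ : Measure ℝ) [IsProbabilityMeasure μ₀] :
    Measurable (stmtQ μ₀) := by
  apply measurable_of_Iic
  intro x
  by_cases h0 : (0:ℝ) ≤ x
  · have : stmtQ μ₀ ⁻¹' Iic x = (Ioo (0:ℝ) 1 ∩ Iic (cdf μ₀ x)) ∪ (Ioo (0:ℝ) 1)ᶜ := by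
      ext u
      by_cases hu : u ∈ Ioo (0:ℝ) 1
      · simp [hu, stmtQ_le_iff hu x, mem_preimage, mem_Iic]
      · simp [hu, mem_preimage, mem_Iic, stmtQ, h0]
    rw [this]
    exact (measurableSet_Ioo.inter measurableSet_Iic).union measurableSet_Ioo.compl
  · have : stmtQ μ₀ ⁻¹' Iic x = (Ioo (0:ℝ) 1 ∩ Iic (cdf μ₀ x)) := by
      ext u
      by_cases hu : u ∈ Ioo (0:ℝ) 1
      · simp [hu, stmtQ_le_iff hu x, mem_preimage, mem_Iic]
      · simp [hu, mem_preimage, mem_Iic, stmtQ, h0]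
    rw [this]
    exact measurableSet_Ioo.inter measurableSet_Iic

lemma stmt13_lint {n : ℕ} (hn : 0 < n) {t : ℝ} (h0 : 0 ≤ t) (h1 : t ≤ 1) :
    ∫⁻ u in Set.Iic t ∩ Set.Ioo 0 1, ENNReal.ofReal (n * u^(n-1)) ∂volume
      = ENNReal.ofReal (t^n) := by
  have hst : (Set.Iic t ∩ Set.Ioo 0 1 : Set ℝ) =ᵐ[volume] (Set.Ioo 0 t : Set ℝ) := by
    rcases eq_or_lt_of_le h1 with h|h
    · have : Set.Iic t ∩ Set.Ioo 0 1 = Set.Ioo 0 t := by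
        subst h
        ext u
        simp only [mem_inter_iff, mem_Iic, mem_Ioo]
        constructor
        · rintro ⟨h1, h2, h3⟩; exact ⟨h2, h3⟩
        · rintro ⟨h2, h3⟩; exact ⟨h3.le, h2, h3⟩
      rw [this]
      exact EventuallyEq.rfl
    · have : Set.Iic t ∩ Set.Ioo 0 1 = Set.Ioc 0 t := by
        ext u
        simp only [mem_inter_iff, mem_Iic, mem_Ioo, mem_Ioc]
        constructor
        · rintro ⟨h1, h2, h3⟩; exact ⟨h2, h1⟩
        · rintro ⟨h2, h3⟩; exact ⟨h3, h2, lt_of_le_of_lt h3 h⟩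
      rw [this]
      exact (Ioo_ae_eq_Ioc (α := ℝ)).symm
  rw [setLIntegral_congr hst]
  have hint : IntegrableOn (fun u : ℝ => (n : ℝ) * u ^ (n-1)) (Set.Ioo 0 t) volume := by
    rw [← intervalIntegrable_iff_integrableOn_Ioo_of_le h0]
    exact (continuous_const.mul (continuous_pow _)).intervalIntegrable _ _
  have hnn : 0 ≤ᵐ[volume.restrict (Set.Ioo 0 t)] fun u : ℝ => (n : ℝ) * u ^ (n-1) := by
    refine (ae_restrict_iff' measurableSet_Ioo).mpr (ae_of_all _ fun u hu => ?_)
    exact mul_nonneg (Nat.cast_nonneg n) (pow_nonneg hu.1.le _)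
  rw [← ofReal_integral_eq_lintegral_ofReal hint hnn]
  congr 1
  rw [← integral_Ioc_eq_integral_Ioo, ← intervalIntegral.integral_of_le h0,
    intervalIntegral.integral_const_mul, integral_pow]
  rw [Nat.sub_add_cancel hn, zero_pow hn.ne']
  have hne : (n : ℝ) ≠ 0 := Nat.cast_ne_zero.mpr hn.ne'
  field_simp
  push_cast [Nat.cast_sub (show 1 ≤ n from hn)]
  ring

theorem stmt13 {Ω : Type*} [MeasurableSpace Ω] (μ : Measure Ω) [IsProbabilityMeasure μ]
    (n : ℕ) (hn : 0 < n) (X : Fin n → Ω → ℝ) (hmeas : ∀ i, Measurable (X i))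
    (hindep : iIndepFun X μ)
    (μ₀ : Measure ℝ) (hid : ∀ i, Measure.map (X i) μ = μ₀)
    (α : ℝ) (hα : 1 < α) :
    (α - 1)⁻¹ * Real.log
        ((∫⁻ x, ((Measure.map (fun ω =>
            Finset.univ.sup' (Finset.univ_nonempty_iff.mpr (Fin.pos_iff_nonempty.mp hn))
              fun i => X i ω) μ).rnDeriv μ₀ x) ^ α ∂μ₀).toReal)
      ≤ (α - 1)⁻¹ * Real.log ((n:ℝ) ^ α / (α * ((n:ℝ) - 1) + 1)) ∧
    (α - 1)⁻¹ * Real.log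
        ((∫⁻ x, ((Measure.map (fun ω =>
            Finset.univ.sup' (Finset.univ_nonempty_iff.mpr (Fin.pos_iff_nonempty.mp hn))
              fun i => X i ω) μ).rnDeriv μ₀ x) ^ α ∂μ₀).toReal)
      ≤ Real.log n := by
  have hne' : (Finset.univ : Finset (Fin n)).Nonempty :=
    Finset.univ_nonempty_iff.mpr (Fin.pos_iff_nonempty.mp hn)
  set M : Ω → ℝ := fun ω =>
    Finset.univ.sup' (Finset.univ_nonempty_iff.mpr (Fin.pos_iff_nonempty.mp hn))
      fun i => X i ω with hM
  set ν : Measure ℝ := Measure.map M μ with hν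
  haveI hprob₀ : IsProbabilityMeasure μ₀ := by
    have i0 : Fin n := ⟨0, hn⟩
    rw [← hid i0]
    exact Measure.isProbabilityMeasure_map (hmeas i0).aemeasurable
  have hMmeas : Measurable M := by
    have h2 : M = Finset.univ.sup' hne' X := by
      funext ω; rw [hM]; simp [Finset.sup'_apply]
    rw [h2]
    exact Finset.measurable_sup' hne' fun i _ => hmeas i
  haveI : IsProbabilityMeasure ν := Measure.isProbabilityMeasure_map hMmeas.aemeasurable
  have hα0 : (0:ℝ) < α := lt_trans one_pos hα
  have hα1 : (0:ℝ) < α - 1 := sub_pos.mpr hα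
  set lam : Measure ℝ := volume.restrict (Set.Ioo 0 1) with hlam
  set gd : ℝ → ℝ≥0∞ := fun u => ENNReal.ofReal (n * u^(n-1)) with hgd
  set ρ : Measure ℝ := lam.withDensity gd with hρ
  have hgdmeas : Measurable gd :=
    ((measurable_id.pow_const (n-1)).const_mul (n:ℝ)).ennreal_ofReal
  have hQmeas := stmtQ_measurable μ₀
  have hpre : ∀ x : ℝ, stmtQ μ₀ ⁻¹' Set.Iic x ∩ Set.Ioo 0 1
      = Set.Iic (cdf μ₀ x) ∩ Set.Ioo 0 1 := by
    intro x
    ext u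
    simp only [mem_inter_iff, mem_preimage, mem_Iic]
    constructor
    · rintro ⟨h1, h2⟩; exact ⟨(stmtQ_le_iff h2 x).mp h1, h2⟩
    · rintro ⟨h1, h2⟩; exact ⟨(stmtQ_le_iff h2 x).mpr h1, h2⟩
  have hmapρ : ∀ x : ℝ, Measure.map (stmtQ μ₀) ρ (Set.Iic x)
      = ENNReal.ofReal ((cdf μ₀ x)^n) := by
    intro x
    rw [Measure.map_apply hQmeas measurableSet_Iic, hρ,
      withDensity_apply _ (hQmeas measurableSet_Iic), hlam,
      Measure.restrict_restrict (hQmeas measurableSet_Iic), hpre x]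
    exact stmt13_lint hn (cdf_nonneg μ₀ x) (cdf_le_one μ₀ x)
  have hmapl : ∀ x : ℝ, Measure.map (stmtQ μ₀) lam (Set.Iic x)
      = ENNReal.ofReal (cdf μ₀ x) := by
    intro x
    rw [Measure.map_apply hQmeas measurableSet_Iic, hlam,
      Measure.restrict_apply (hQmeas measurableSet_Iic), hpre x]
    have h := stmt13_lint (n := 1) one_pos (cdf_nonneg μ₀ x) (cdf_le_one μ₀ x)
    simpa using h
  have hμ₀eq : μ₀ = Measure.map (stmtQ μ₀) lam := by
    refine MeasureTheory.Measure.ext_of_Iic μ₀ _ fun x => ?_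
    rw [hmapl x, ofReal_cdf]
  have hν_Iic : ∀ x : ℝ, ν (Set.Iic x) = ENNReal.ofReal ((cdf μ₀ x)^n) := by
    intro x
    rw [hν, Measure.map_apply hMmeas measurableSet_Iic]
    have hset : M ⁻¹' Set.Iic x = ⋂ i, X i ⁻¹' Set.Iic x := by
      ext ω
      simp [hM, Finset.sup'_le_iff]
    rw [hset, hindep.meas_iInter fun i => ⟨Set.Iic x, measurableSet_Iic, rfl⟩]
    have hone : ∀ i, μ (X i ⁻¹' Set.Iic x) = ENNReal.ofReal (cdf μ₀ x) := by
      intro i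
      rw [← Measure.map_apply (hmeas i) measurableSet_Iic, hid i, ofReal_cdf]
    simp only [hone]
    rw [Finset.prod_const, Finset.card_univ, Fintype.card_fin,
      ← ENNReal.ofReal_pow (cdf_nonneg μ₀ x)]
  have hνeq : ν = Measure.map (stmtQ μ₀) ρ := by
    refine MeasureTheory.Measure.ext_of_Iic ν _ fun x => ?_
    rw [hν_Iic x, hmapρ x]
  have hac : ν ≪ μ₀ := by
    have h := (withDensity_absolutelyContinuous lam gd).map hQmeas
    rw [← hνeq, ← hμ₀eq] at h
    exact h
  set f := ν.rnDeriv μ₀ with hf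
  have hfmeas : Measurable f := Measure.measurable_rnDeriv ν μ₀
  set A := ∫⁻ x, f x ^ α ∂μ₀ with hA
  -- bound on ν
  have hνle : ∀ s : Set ℝ, MeasurableSet s → ν s ≤ n * μ₀ s := by
    intro s hs
    rw [hν, Measure.map_apply hMmeas hs]
    have hsub : M ⁻¹' s ⊆ ⋃ i, X i ⁻¹' s := by
      intro ω hω
      obtain ⟨i, -, hi⟩ := Finset.exists_mem_eq_sup' hne' (fun i => X i ω)
      refine Set.mem_iUnion.mpr ⟨i, ?_⟩
      have : M ω = X i ω := hi
      simpa [Set.mem_preimage, ← this] using hω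
    calc μ (M ⁻¹' s) ≤ μ (⋃ i, X i ⁻¹' s) := measure_mono hsub
      _ ≤ ∑' i, μ (X i ⁻¹' s) := measure_iUnion_le _
      _ = ∑ i, μ (X i ⁻¹' s) := tsum_fintype _
      _ = n * μ₀ s := by
          have hone : ∀ i, μ (X i ⁻¹' s) = μ₀ s := fun i => by
            rw [← Measure.map_apply (hmeas i) hs, hid i]
          simp only [hone, Finset.sum_const, Finset.card_univ, Fintype.card_fin, nsmul_eq_mul]
  have hfle : f ≤ᵐ[μ₀] fun _ => (n : ℝ≥0∞) := by
    refine ae_le_of_forall_setLIntegral_le_of_sigmaFinite₀ hfmeas.aemeasurable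
      fun s hs _ => ?_
    rw [Measure.setLIntegral_rnDeriv hac]
    calc ν s ≤ n * μ₀ s := hνle s hs
      _ = ∫⁻ _ in s, (n:ℝ≥0∞) ∂μ₀ := by rw [setLIntegral_const, mul_comm]
  have hAtop : A ≠ ⊤ := by
    have hle : A ≤ (n:ℝ≥0∞) ^ α := by
      calc A ≤ ∫⁻ _x, (n:ℝ≥0∞) ^ α ∂μ₀ :=
            lintegral_mono_ae (hfle.mono fun x hx => ENNReal.rpow_le_rpow hx hα0.le)
        _ = (n:ℝ≥0∞) ^ α := by simp [lintegral_const]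
    exact ne_top_of_le_ne_top
      (ENNReal.rpow_ne_top_of_nonneg hα0.le (ENNReal.natCast_ne_top n)) hle
  -- identities
  have hA1 : A = ∫⁻ u, f (stmtQ μ₀ u) ^ α ∂lam := by
    calc A = ∫⁻ x, f x ^ α ∂(Measure.map (stmtQ μ₀) lam) := by rw [← hμ₀eq]
      _ = ∫⁻ u, f (stmtQ μ₀ u) ^ α ∂lam := lintegral_map (hfmeas.pow_const α) hQmeas
  have hA2 : A = ∫⁻ u, f (stmtQ μ₀ u) ^ (α-1) * gd u ∂lam := by
    have e1 : A = ∫⁻ x, f x * f x ^ (α - 1) ∂μ₀ := by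
      rw [hA]
      refine lintegral_congr fun x => ?_
      calc f x ^ α = f x ^ ((1:ℝ) + (α - 1)) := by norm_num
        _ = f x ^ (1:ℝ) * f x ^ (α-1) := ENNReal.rpow_add_of_nonneg _ _ zero_le_one hα1.le
        _ = f x * f x ^ (α-1) := by rw [ENNReal.rpow_one]
    have e2 : ∫⁻ x, f x * f x ^ (α - 1) ∂μ₀ = ∫⁻ x, f x ^ (α - 1) ∂ν :=
      MeasureTheory.lintegral_rnDeriv_mul hac (hfmeas.pow_const (α-1)).aemeasurable
    have e3 : ∫⁻ x, f x ^ (α - 1) ∂ν = ∫⁻ u, f (stmtQ μ₀ u) ^ (α-1) ∂ρ := by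
      rw [hνeq]
      exact lintegral_map (hfmeas.pow_const (α-1)) hQmeas
    have e4 : ∫⁻ u, f (stmtQ μ₀ u) ^ (α-1) ∂ρ
        = ∫⁻ u, f (stmtQ μ₀ u) ^ (α-1) * gd u ∂lam := by
      have hFm : Measurable fun u => f (stmtQ μ₀ u) ^ (α-1) :=
        (hfmeas.comp hQmeas).pow_const (α-1)
      rw [hρ, lintegral_withDensity_eq_lintegral_mul lam hgdmeas hFm]
      refine lintegral_congr fun u => ?_
      simp [mul_comm]
    rw [e1, e2, e3, e4]
  -- value of B
  set β : ℝ := ((n-1 : ℕ) : ℝ) * α with hβ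
  have hβ0 : (0:ℝ) ≤ β := mul_nonneg (Nat.cast_nonneg _) hα0.le
  set B := ∫⁻ u, gd u ^ α ∂lam with hB
  have hn1 : ((n-1 : ℕ) : ℝ) = (n:ℝ) - 1 := by
    have : (1:ℕ) ≤ n := hn
    push_cast [Nat.cast_sub this]
    ring
  have hBval : B = ENNReal.ofReal ((n:ℝ)^α / (α * ((n:ℝ)-1) + 1)) := by
    have step1 : B = ∫⁻ u in Set.Ioo (0:ℝ) 1, ENNReal.ofReal ((n:ℝ)^α * u ^ β) ∂volume := by
      rw [hB, hlam]
      refine setLIntegral_congr_fun measurableSet_Ioo (fun u hu => ?_)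
      show gd u ^ α = ENNReal.ofReal ((n:ℝ)^α * u ^ β)
      rw [hgd]
      rw [ENNReal.ofReal_rpow_of_nonneg
        (mul_nonneg (Nat.cast_nonneg n) (pow_nonneg hu.1.le _)) hα0.le]
      congr 1
      rw [Real.mul_rpow (Nat.cast_nonneg n) (pow_nonneg hu.1.le _),
        ← Real.rpow_natCast u (n-1), ← Real.rpow_mul hu.1.le]
    have hint : IntegrableOn (fun u : ℝ => (n:ℝ)^α * u ^ β) (Set.Ioo 0 1) volume := by
      have h2 : IntegrableOn (fun u : ℝ => u ^ β) (Set.Ioo 0 1) volume := by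
        rw [← intervalIntegrable_iff_integrableOn_Ioo_of_le zero_le_one]
        exact intervalIntegral.intervalIntegrable_rpow (Or.inl hβ0)
      exact h2.const_mul _
    have hnn2 : 0 ≤ᵐ[volume.restrict (Set.Ioo (0:ℝ) 1)] fun u : ℝ => (n:ℝ)^α * u ^ β :=
      (ae_restrict_iff' measurableSet_Ioo).mpr (ae_of_all _ fun u hu =>
        mul_nonneg (Real.rpow_nonneg (Nat.cast_nonneg n) α) (Real.rpow_nonneg hu.1.le _))
    rw [step1, ← ofReal_integral_eq_lintegral_ofReal hint hnn2]
    congr 1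
    rw [← integral_Ioc_eq_integral_Ioo, ← intervalIntegral.integral_of_le zero_le_one,
      intervalIntegral.integral_const_mul,
      integral_rpow (Or.inl (by linarith : (-1:ℝ) < β))]
    rw [Real.one_rpow, Real.zero_rpow (by positivity)]
    rw [hβ, hn1]
    ring
  -- Hölder
  have hpq : Real.HolderConjugate (α/(α-1)) α := by
    have h := Real.HolderConjugate.conjExponent (p := α) hα
    rw [Real.conjExponent] at h
    exact h.symm
  have hH := ENNReal.lintegral_mul_le_Lp_mul_Lq lam hpq
    ((hfmeas.comp hQmeas).pow_const (α-1)).aemeasurable hgdmeas.aemeasurable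
  have hHA : ∫⁻ u, (f (stmtQ μ₀ u) ^ (α-1)) ^ (α/(α-1)) ∂lam = A := by
    rw [hA1]
    refine lintegral_congr fun u => ?_
    rw [← ENNReal.rpow_mul]
    congr 1
    field_simp
  have hH' : A ≤ A ^ ((α-1)/α) * B ^ (1/α) := by
    calc A = ∫⁻ u, f (stmtQ μ₀ u) ^ (α-1) * gd u ∂lam := hA2
      _ ≤ (∫⁻ u, (f (stmtQ μ₀ u) ^ (α-1)) ^ (α/(α-1)) ∂lam) ^ (1/(α/(α-1)))
          * (∫⁻ u, gd u ^ α ∂lam) ^ (1/α) := hH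
      _ = A ^ ((α-1)/α) * B ^ (1/α) := by rw [hHA, one_div_div, ← hB]
  -- cancel
  have hAB : A ≤ B := by
    rcases eq_or_ne A 0 with h0 | h0
    · rw [h0]; exact zero_le
    · have hs : (0:ℝ) ≤ (α-1)/α := by positivity
      have hr : (0:ℝ) < 1/α := by positivity
      have key : A ^ ((α-1)/α) * A ^ (1/α) ≤ A ^ ((α-1)/α) * B ^ (1/α) := by
        calc A ^ ((α-1)/α) * A ^ (1/α)
            = A ^ ((α-1)/α + 1/α) := (ENNReal.rpow_add_of_nonneg _ _ hs hr.le).symm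
          _ = A := by
              rw [show (α-1)/α + 1/α = 1 by field_simp; ring, ENNReal.rpow_one]
          _ ≤ A ^ ((α-1)/α) * B ^ (1/α) := hH'
      have hAs0 : A ^ ((α-1)/α) ≠ 0 := by
        simp only [ne_eq, ENNReal.rpow_eq_zero_iff, not_or]
        constructor
        · rintro ⟨h, -⟩; exact h0 h
        · rintro ⟨h, -⟩; exact hAtop h
      have hAstop : A ^ ((α-1)/α) ≠ ⊤ := ENNReal.rpow_ne_top_of_nonneg hs hAtop
      have h2 := (ENNReal.mul_le_mul_iff_right hAs0 hAstop).mp key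
      exact (ENNReal.rpow_le_rpow_iff hr).mp h2
  rw [hBval] at hAB
  have hden : (0:ℝ) < α * ((n:ℝ)-1) + 1 := by
    have h1 : (1:ℝ) ≤ (n:ℝ) := by exact_mod_cast hn
    nlinarith
  have hC1 : (1:ℝ) ≤ (n:ℝ)^α / (α * ((n:ℝ)-1) + 1) := by
    rw [le_div_iff₀ hden]
    have hBern := one_add_mul_self_le_rpow_one_add
      (s := (n:ℝ)-1) (by
        have h1 : (1:ℝ) ≤ (n:ℝ) := by exact_mod_cast hn
        linarith) hα.le
    have : (1:ℝ) + ((n:ℝ)-1) = (n:ℝ) := by ring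
    rw [this] at hBern
    linarith
  have hAr : A.toReal ≤ (n:ℝ)^α / (α * ((n:ℝ)-1) + 1) :=
    ENNReal.toReal_le_of_le_ofReal (by positivity) hAB
  have hlog : Real.log A.toReal ≤ Real.log ((n:ℝ)^α / (α * ((n:ℝ)-1) + 1)) := by
    rcases eq_or_lt_of_le (ENNReal.toReal_nonneg : (0:ℝ) ≤ A.toReal) with h0 | h0
    · rw [← h0, Real.log_zero]
      exact Real.log_nonneg hC1
    · exact Real.log_le_log h0 hAr
  have hfirst : (α - 1)⁻¹ * Real.log A.toReal
      ≤ (α - 1)⁻¹ * Real.log ((n:ℝ)^α / (α * ((n:ℝ)-1) + 1)) :=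
    mul_le_mul_of_nonneg_left hlog (inv_nonneg.mpr hα1.le)
  have hsecond : (α - 1)⁻¹ * Real.log ((n:ℝ)^α / (α * ((n:ℝ)-1) + 1)) ≤ Real.log n := by
    have hnpos : (0:ℝ) < (n:ℝ) := by exact_mod_cast hn
    rw [Real.log_div (by positivity) hden.ne', Real.log_rpow hnpos]
    rw [inv_mul_le_iff₀ hα1]
    have hlogn : Real.log (n:ℝ) ≤ Real.log (α * ((n:ℝ)-1) + 1) := by
      apply Real.log_le_log hnpos
      nlinarith [hnpos, hα1]
    nlinarith [hlogn]
  exact ⟨hfirst, hfirst.trans hsecond⟩
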